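/- arXiv:1107.5776 — 5 statements merged into one kernel-verified Lean document; each statement's English description precedes it below -/
import Mathlib

section
/- Let T>0 and let z:[0,T]→ℝ^d be continuous with z^i(0)≥0 for every i=1,…,d. Define y:[0,T]→ℝ^d componentwise by y^i(t) = sup_{s∈[0,t]} max(−z^i(s),0) and set x = z + y. Then: (1) x(t) ∈ ℝ_+^d for every t ∈ [0,T]; (2) for each i, y^i(0)=0, y^i is continuous and nondecreasing; (3) for each i, the Lebesgue–Stieltjes measure associated to the nondecreasing continuous function y^i assigns zero mass to the set {t ∈ [0,T] : x^i(t) > 0}, i.e. y^i increases only when x^i is at zero. -/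
open Set MeasureTheory

namespace SkAux

variable {T : ℝ} {g : ℝ → ℝ}

noncomputable def runSup (g : ℝ → ℝ) (t : ℝ) : ℝ := sSup (g '' Icc 0 t)

lemma bdd (hg : ContinuousOn g (Icc 0 T)) {t : ℝ} (ht : t ∈ Icc 0 T) :
    BddAbove (g '' Icc 0 t) :=
  (isCompact_Icc.image_of_continuousOn (hg.mono (Icc_subset_Icc le_rfl ht.2))).bddAbove

lemma le_runSup (hg : ContinuousOn g (Icc 0 T)) {t s : ℝ} (ht : t ∈ Icc 0 T)
    (hs : s ∈ Icc 0 t) : g s ≤ runSup g t :=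
  le_csSup (bdd hg ht) (mem_image_of_mem g hs)

lemma runSup_nonneg (hg : ContinuousOn g (Icc 0 T)) (hgnn : ∀ s, 0 ≤ g s)
    {t : ℝ} (ht : t ∈ Icc 0 T) : 0 ≤ runSup g t :=
  le_trans (hgnn 0) (le_runSup hg ht ⟨le_rfl, ht.1⟩)

lemma runSup_mono (hg : ContinuousOn g (Icc 0 T)) : MonotoneOn (runSup g) (Icc 0 T) :=
  fun a ha b hb hab =>
    csSup_le_csSup (bdd hg hb) ((nonempty_Icc.2 ha.1).image g)
      (image_mono (f := g) (Icc_subset_Icc le_rfl hab))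

lemma runSup_zero (hg0 : g 0 = 0) : runSup g 0 = 0 := by
  simp [runSup, Icc_self, hg0]

lemma runSup_split (hg : ContinuousOn g (Icc 0 T)) {t1 t2 : ℝ}
    (h1 : t1 ∈ Icc 0 T) (h2 : t2 ∈ Icc 0 T) (h12 : t1 ≤ t2) :
    runSup g t2 = runSup g t1 ⊔ sSup (g '' Icc t1 t2) := by
  have hU : Icc (0:ℝ) t2 = Icc 0 t1 ∪ Icc t1 t2 := (Icc_union_Icc_eq_Icc h1.1 h12).symm
  rw [runSup, hU, image_union,
    csSup_union (bdd hg h1) ((nonempty_Icc.2 h1.1).image g)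
      ((bdd hg h2).mono (image_mono (f := g) (Icc_subset_Icc h1.1 le_rfl)))
      ((nonempty_Icc.2 h12).image g)]
  rfl

lemma runSup_cont (hg : ContinuousOn g (Icc 0 T)) : ContinuousOn (runSup g) (Icc 0 T) := by
  intro t ht
  rw [Metric.continuousWithinAt_iff]
  intro ε hε
  have hu := isCompact_Icc.uniformContinuousOn_of_continuous hg
  rw [Metric.uniformContinuousOn_iff] at hu
  obtain ⟨δ, hδ, H⟩ := hu (ε / 2) (by positivity)
  refine ⟨δ, hδ, ?_⟩
  intro s hs hst
  have key : ∀ a ∈ Icc (0:ℝ) T, ∀ b ∈ Icc (0:ℝ) T, a ≤ b → b - a < δ →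
      runSup g b ≤ runSup g a + ε / 2 := by
    intro a ha b hb hab hd
    rw [runSup_split hg ha hb hab]
    refine sup_le (le_add_of_nonneg_right (by positivity)) ?_
    refine csSup_le ((nonempty_Icc.2 hab).image g) ?_
    rintro _ ⟨u, hu', rfl⟩
    have hua : u ∈ Icc (0:ℝ) T := ⟨ha.1.trans hu'.1, hu'.2.trans hb.2⟩
    have : dist u a < δ := by
      rw [Real.dist_eq, abs_of_nonneg (sub_nonneg.2 hu'.1)]
      linarith [hu'.2]
    have := H u hua a ha this
    rw [Real.dist_eq] at this
    have hga : g a ≤ runSup g a := le_runSup hg ha ⟨ha.1, le_rfl⟩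
    cases abs_lt.1 this with
    | intro h1 h2 => linarith
  rw [Real.dist_eq] at hst ⊢
  rcases le_total s t with h | h
  · have h1 : runSup g s ≤ runSup g t := runSup_mono hg hs ht h
    have h2 : runSup g t ≤ runSup g s + ε / 2 := by
      refine key s hs t ht h ?_
      cases abs_lt.1 hst with | intro a b => linarith
    rw [abs_of_nonpos (by linarith)]
    linarith
  · have h1 : runSup g t ≤ runSup g s := runSup_mono hg ht hs h
    have h2 : runSup g s ≤ runSup g t + ε / 2 := by
      refine key t ht s hs h ?_
      cases abs_lt.1 hst with | intro a b => linarith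
    rw [abs_of_nonneg (by linarith)]
    linarith

lemma runSup_locally_const (hg : ContinuousOn g (Icc 0 T)) (hgnn : ∀ s, 0 ≤ g s)
    {t δ : ℝ} (ht : t ∈ Icc 0 T) (hδ : 0 < δ)
    (H : ∀ s ∈ Icc (0:ℝ) T, |s - t| < δ → g s ≤ runSup g t ∧ (0 < runSup g t → g s < runSup g t)) :
    ∀ s ∈ Icc (0:ℝ) T, |s - t| < δ → runSup g s = runSup g t := by
  intro s hs hst
  rcases le_total t s with h | h
  · rw [runSup_split hg ht hs h]
    refine sup_eq_left.2 (csSup_le ((nonempty_Icc.2 h).image g) ?_)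
    rintro _ ⟨u, hu, rfl⟩
    have hut : u ∈ Icc (0:ℝ) T := ⟨ht.1.trans hu.1, hu.2.trans hs.2⟩
    refine (H u hut ?_).1
    rw [abs_of_nonneg (sub_nonneg.2 hu.1)]
    rw [abs_of_nonneg (sub_nonneg.2 h)] at hst
    linarith [hu.2]
  · have hmono : runSup g s ≤ runSup g t := runSup_mono hg hs ht h
    rcases eq_or_lt_of_le (runSup_nonneg hg hgnn ht) with h0 | h0
    · have : 0 ≤ runSup g s := runSup_nonneg hg hgnn hs
      linarith [hmono, h0.symm ▸ hmono]
    · obtain ⟨u, hu, hmax⟩ := isCompact_Icc.exists_sSup_image_eq (nonempty_Icc.2 h)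
        (hg.mono (Icc_subset_Icc hs.1 ht.2))
      have hsplit := runSup_split hg hs ht h
      rw [hmax] at hsplit
      have hut : u ∈ Icc (0:ℝ) T := ⟨hs.1.trans hu.1, hu.2.trans ht.2⟩
      have hgu : g u < runSup g t := by
        refine (H u hut ?_).2 h0
        rw [abs_of_nonpos (sub_nonpos.2 hu.2)]
        rw [abs_of_nonpos (sub_nonpos.2 h)] at hst
        linarith [hu.1]
      rcases le_or_gt (runSup g t) (runSup g s) with h' | h'
      · exact le_antisymm hmono h'
      · exfalso
        have : runSup g t ≤ runSup g s ⊔ g u := hsplit.le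
        rcases le_sup_iff.1 this with h'' | h'' <;> linarith

/-- clamp to [0,T] -/
noncomputable def clamp (T s : ℝ) : ℝ := max 0 (min s T)

lemma clamp_mem (hT : 0 ≤ T) (s : ℝ) : clamp T s ∈ Icc (0:ℝ) T :=
  ⟨le_max_left _ _, max_le hT (min_le_right _ _)⟩

lemma clamp_eq_self (hT : 0 ≤ T) {s : ℝ} (hs : s ∈ Icc (0:ℝ) T) : clamp T s = s := by
  rw [clamp, min_eq_left hs.2, max_eq_right hs.1]

lemma clamp_mono : Monotone (clamp T) :=
  fun a b hab => max_le_max le_rfl (min_le_min (by exact hab) le_rfl)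

lemma clamp_continuous : Continuous (clamp T) :=
  continuous_const.max ((continuous_id.min continuous_const))

lemma clamp_dist (hT : 0 ≤ T) {t : ℝ} (ht : t ∈ Icc (0:ℝ) T) (s : ℝ) :
    |clamp T s - t| ≤ |s - t| := by
  have h1 : clamp T t = t := clamp_eq_self hT ht
  calc |clamp T s - t| = |clamp T s - clamp T t| := by rw [h1]
    _ ≤ |min s T - min t T| := by
        simpa [clamp, max_comm] using abs_max_sub_max_le_abs (min s T) (min t T) 0
    _ ≤ max |s - t| |T - T| := abs_min_sub_min_le_max s T t T
    _ = |s - t| := by rw [sub_self, abs_zero, max_eq_left (abs_nonneg _)]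

end SkAux

open SkAux

/-- properties of the Skorokhod reflection (regulator/reflector) of a
continuous path `z` with nonnegative initial components. -/
theorem stmt0 (d : ℕ) (T : ℝ) (hT : 0 < T)
    (z : ℝ → Fin d → ℝ) (hz : ContinuousOn z (Icc 0 T)) (hz0 : ∀ i, 0 ≤ z 0 i)
    (y : ℝ → Fin d → ℝ)
    (hy : ∀ t ∈ Icc (0:ℝ) T, ∀ i, y t i = sSup ((fun s => max (-(z s i)) 0) '' Icc 0 t))
    (x : ℝ → Fin d → ℝ) (hx : ∀ t ∈ Icc (0:ℝ) T, x t = z t + y t) :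
    (∀ t ∈ Icc (0:ℝ) T, ∀ i, 0 ≤ x t i) ∧
    (∀ i, y 0 i = 0) ∧
    (∀ i, ContinuousOn (fun t => y t i) (Icc 0 T)) ∧
    (∀ i, MonotoneOn (fun t => y t i) (Icc 0 T)) ∧
    (∀ i, ∃ F : StieltjesFunction ℝ, (Continuous fun t => F t) ∧
      (∀ t ∈ Icc (0:ℝ) T, F t = y t i) ∧
      F.measure {t | t ∈ Icc (0:ℝ) T ∧ 0 < x t i} = 0) := by
  have h0T : (0:ℝ) ∈ Icc (0:ℝ) T := ⟨le_rfl, hT.le⟩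
  set g : Fin d → ℝ → ℝ := fun i s => max (-(z s i)) 0 with hgdef
  have hzc : ∀ i, ContinuousOn (fun s => z s i) (Icc 0 T) :=
    fun i => (continuous_apply i).comp_continuousOn hz
  have hgc : ∀ i, ContinuousOn (g i) (Icc 0 T) :=
    fun i => (continuous_neg.max continuous_const).comp_continuousOn (hzc i)
  have hgnn : ∀ i s, 0 ≤ g i s := fun i s => le_max_right _ _
  have hg0 : ∀ i, g i 0 = 0 := fun i => max_eq_right (neg_nonpos.2 (hz0 i))
  have hyr : ∀ t ∈ Icc (0:ℝ) T, ∀ i, y t i = runSup (g i) t := by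
    intro t ht i; rw [hy t ht i]; rfl
  -- part 1
  have part1 : ∀ t ∈ Icc (0:ℝ) T, ∀ i, 0 ≤ x t i := by
    intro t ht i
    rw [hx t ht]
    have h1 : g i t ≤ runSup (g i) t := le_runSup (hgc i) ht ⟨ht.1, le_rfl⟩
    have h2 : -(z t i) ≤ g i t := le_max_left _ _
    have := hyr t ht i
    simp only [Pi.add_apply]
    rw [this]
    linarith
  refine ⟨part1, ?_, ?_, ?_, ?_⟩
  · intro i
    rw [hyr 0 h0T i, runSup_zero (hg0 i)]
  · intro i
    exact (runSup_cont (hgc i)).congr (fun t ht => hyr t ht i)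
  · intro i
    intro a ha b hb hab
    show y a i ≤ y b i
    rw [hyr a ha i, hyr b hb i]
    exact runSup_mono (hgc i) ha hb hab
  · intro i
    set f : ℝ → ℝ := fun s => runSup (g i) (clamp T s) with hfdef
    have hFmono : Monotone f := fun a b hab =>
      runSup_mono (hgc i) (clamp_mem hT.le a) (clamp_mem hT.le b) (clamp_mono hab)
    have hFcont : Continuous f := by
      rw [← continuousOn_univ]
      exact (runSup_cont (hgc i)).comp clamp_continuous.continuousOn
        (fun s _ => clamp_mem hT.le s)
    set F : StieltjesFunction ℝ :=
      { toFun := f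
        mono' := hFmono
        right_continuous' := fun s => hFcont.continuousAt.continuousWithinAt } with hFdef
    have hFval : ∀ t ∈ Icc (0:ℝ) T, F t = y t i := by
      intro t ht
      show f t = y t i
      rw [hfdef]
      simp only
      rw [clamp_eq_self hT.le ht, hyr t ht i]
    refine ⟨F, hFcont, hFval, ?_⟩
    apply measure_null_of_locally_null
    intro t ht
    obtain ⟨ht1, ht2⟩ := ht
    -- x t i > 0
    have hxt : 0 < z t i + runSup (g i) t := by
      have := hx t ht1
      rw [this] at ht2
      simp only [Pi.add_apply] at ht2
      rwa [hyr t ht1 i] at ht2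
    have hrnn : 0 ≤ runSup (g i) t := runSup_nonneg (hgc i) (hgnn i) ht1
    -- find δ with condition H
    have hH : ∃ δ > 0, ∀ s ∈ Icc (0:ℝ) T, |s - t| < δ →
        g i s ≤ runSup (g i) t ∧ (0 < runSup (g i) t → g i s < runSup (g i) t) := by
      rcases eq_or_lt_of_le hrnn with h0 | h0
      · -- runSup = 0, so z t i > 0
        have hzt : 0 < z t i := by linarith [h0.symm]
        have hc := (hzc i) t ht1
        rw [Metric.continuousWithinAt_iff] at hc
        obtain ⟨δ, hδ, Hc⟩ := hc (z t i) hzt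
        refine ⟨δ, hδ, ?_⟩
        intro s hs hst
        have := Hc hs (by rwa [Real.dist_eq])
        rw [Real.dist_eq] at this
        have hzs : 0 < z s i := by cases abs_lt.1 this with | intro a b => linarith
        have : g i s = 0 := max_eq_right (neg_nonpos.2 hzs.le)
        constructor
        · rw [this]; exact hrnn
        · intro h; rw [← h0] at h; exact absurd h (lt_irrefl 0)
      · -- runSup > 0 ; g i t < runSup
        have hgt : g i t < runSup (g i) t := by
          apply max_lt _ h0
          linarith
        have hc := (hgc i) t ht1
        rw [Metric.continuousWithinAt_iff] at hc
        obtain ⟨δ, hδ, Hc⟩ := hc (runSup (g i) t - g i t) (by linarith)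
        refine ⟨δ, hδ, ?_⟩
        intro s hs hst
        have := Hc hs (by rwa [Real.dist_eq])
        rw [Real.dist_eq] at this
        have : g i s < runSup (g i) t := by cases abs_lt.1 this with | intro a b => linarith
        exact ⟨this.le, fun _ => this⟩
    obtain ⟨δ, hδ, H⟩ := hH
    have hconst := runSup_locally_const (hgc i) (hgnn i) ht1 hδ H
    -- F constant on ball t δ
    have hFconst : ∀ s : ℝ, |s - t| < δ → F s = runSup (g i) t := by
      intro s hst
      show f s = _
      exact hconst (clamp T s) (clamp_mem hT.le s)
        (lt_of_le_of_lt (clamp_dist hT.le ht1 s) hst)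
    refine ⟨Ioo (t - δ/2) (t + δ/2), ?_, ?_⟩
    · exact mem_nhdsWithin_of_mem_nhds (Ioo_mem_nhds (by linarith) (by linarith))
    · rw [StieltjesFunction.measure_Ioo]
      have hl : Function.leftLim F (t + δ/2) = F (t + δ/2) :=
        leftLim_eq_of_tendsto
          (hFcont.continuousAt.continuousWithinAt)
      rw [hl, hFconst (t + δ/2) (by rw [abs_of_nonneg (by linarith)]; linarith),
        hFconst (t - δ/2) (by rw [abs_of_nonpos (by linarith)]; linarith)]
      simp
end

section
/- Let T>0 and let z:[0,T]→ℝ^d be continuous with z^i(0)≥0 for every i. Suppose (x,y) is a pair of continuous functions from [0,T] to ℝ^d such that: x = z + y; x(t) ∈ ℝ_+^d for all t; for each i, y^i(0)=0 and y^i is nondecreasing; and for each i the Lebesgue–Stieltjes measure of y^i assigns zero mass to {t : x^i(t) > 0}. Then y is uniquely determined: y^i(t) = sup_{s∈[0,t]} max(−z^i(s),0) for every i and every t ∈ [0,T], and consequently x = z + y is also uniquely determined. -/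
open Set MeasureTheory

/-- uniqueness for the Skorokhod problem: any solution `(x, y)` of the
Skorokhod problem for a continuous path `z` with nonnegative initial components is given
by the explicit regulator formula. -/
theorem stmt1 (d : ℕ) (T : ℝ) (hT : 0 < T)
    (z x y : ℝ → Fin d → ℝ)
    (hz : ContinuousOn z (Icc 0 T)) (hz0 : ∀ i, 0 ≤ z 0 i)
    (hxc : ContinuousOn x (Icc 0 T)) (hyc : ContinuousOn y (Icc 0 T))
    (hxy : ∀ t ∈ Icc (0:ℝ) T, x t = z t + y t)
    (hxpos : ∀ t ∈ Icc (0:ℝ) T, ∀ i, 0 ≤ x t i)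
    (hy0 : ∀ i, y 0 i = 0)
    (hymono : ∀ i, MonotoneOn (fun t => y t i) (Icc 0 T))
    (hsupp : ∀ i, ∃ F : StieltjesFunction ℝ, (Continuous fun t => F t) ∧
      (∀ t ∈ Icc (0:ℝ) T, F t = y t i) ∧
      F.measure {t | t ∈ Icc (0:ℝ) T ∧ 0 < x t i} = 0) :
    ∀ t ∈ Icc (0:ℝ) T, ∀ i,
      y t i = sSup ((fun s => max (-(z s i)) 0) '' Icc 0 t) ∧
      x t i = z t i + sSup ((fun s => max (-(z s i)) 0) '' Icc 0 t) := by
  intro t ht i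
  have ht0 : (0:ℝ) ≤ t := ht.1
  have htT : t ≤ T := ht.2
  have hsub : Icc (0:ℝ) t ⊆ Icc 0 T := Icc_subset_Icc le_rfl htT
  have h0T : (0:ℝ) ∈ Icc (0:ℝ) T := ⟨le_rfl, hT.le⟩
  set f : ℝ → ℝ := fun s => max (-(z s i)) 0 with hfdef
  have hfc : ContinuousOn f (Icc 0 t) :=
    (((continuous_apply i).comp_continuousOn (hz.mono hsub)).neg).sup' continuousOn_const
  have hne : (f '' Icc 0 t).Nonempty :=
    ⟨f 0, mem_image_of_mem _ (left_mem_Icc.2 ht0)⟩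
  have hbdd : BddAbove (f '' Icc 0 t) :=
    (isCompact_Icc.image_of_continuousOn hfc).bddAbove
  set M : ℝ := sSup (f '' Icc 0 t) with hMdef
  have hMf : ∀ s ∈ Icc (0:ℝ) t, f s ≤ M := fun s hs =>
    le_csSup hbdd (mem_image_of_mem _ hs)
  have hM0 : 0 ≤ M := le_trans (le_max_right _ _) (hMf 0 (left_mem_Icc.2 ht0))
  -- pointwise : f s ≤ y s i for s ∈ [0,t]
  have hyM : ∀ s ∈ Icc (0:ℝ) t, f s ≤ y s i := by
    intro s hs
    have hsT : s ∈ Icc 0 T := hsub hs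
    have h1 : 0 ≤ y s i := by
      have := hymono i h0T hsT hs.1
      simpa [hy0 i] using this
    have h2 : -(z s i) ≤ y s i := by
      have hx := hxpos s hsT i
      have hxs : x s i = z s i + y s i := by rw [hxy s hsT]; simp
      linarith [hxs ▸ hx]
    exact max_le h2 h1
  have step1 : M ≤ y t i := by
    refine csSup_le hne ?_
    rintro v ⟨s, hs, rfl⟩
    exact (hyM s hs).trans (hymono i (hsub hs) ht hs.2)
  have step2 : y t i ≤ M := by
    by_contra hlt
    push_neg at hlt
    set S : Set ℝ := Icc 0 t ∩ {s | y s i ≤ M} with hSdef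
    have hyci : ContinuousOn (fun s => y s i) (Icc 0 t) :=
      (continuous_apply i).comp_continuousOn (hyc.mono hsub)
    have hScl : IsClosed S :=
      hyci.preimage_isClosed_of_isClosed isClosed_Icc isClosed_Iic
    have h0S : (0:ℝ) ∈ S := ⟨left_mem_Icc.2 ht0, by simp [hy0 i, hM0]⟩
    have hSbdd : BddAbove S := ⟨t, fun s hs => hs.1.2⟩
    set u : ℝ := sSup S with hudef
    have huS : u ∈ S := hScl.csSup_mem ⟨0, h0S⟩ hSbdd
    have hut : u < t := lt_of_le_of_ne huS.1.2 (by
      intro he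
      have := huS.2
      rw [he] at this
      exact absurd hlt (not_lt.2 this))
    obtain ⟨F, hFc, hFy, hF0⟩ := hsupp i
    have hsub' : Ioc u t ⊆ {s | s ∈ Icc (0:ℝ) T ∧ 0 < x s i} := by
      intro s hs
      have hs0t : s ∈ Icc 0 t := ⟨huS.1.1.trans hs.1.le, hs.2⟩
      have hsT : s ∈ Icc 0 T := hsub hs0t
      refine ⟨hsT, ?_⟩
      have hys : M < y s i := by
        by_contra h'
        push_neg at h'
        exact absurd hs.1 (not_lt.2 (le_csSup hSbdd ⟨hs0t, h'⟩))
      have hxs : x s i = z s i + y s i := by rw [hxy s hsT]; simp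
      have hMz : -(z s i) ≤ M := (le_max_left _ _).trans (hMf s hs0t)
      rw [hxs]; linarith
    have hmle : F.measure (Ioc u t) = 0 :=
      le_antisymm (hF0 ▸ measure_mono hsub') zero_le
    rw [StieltjesFunction.measure_Ioc] at hmle
    have hFle : F t - F u ≤ 0 := by
      simpa using ENNReal.ofReal_eq_zero.mp hmle
    rw [hFy t ht, hFy u (hsub huS.1)] at hFle
    have h2 : y u i ≤ M := huS.2
    linarith
  have hy : y t i = M := le_antisymm step2 step1
  refine ⟨hy, ?_⟩
  have hxs : x t i = z t i + y t i := by rw [hxy t ht]; simp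
  rw [hxs, hy]
end

section
/- Let T>0 and let z_1, z_2 : [0,T] → ℝ^d be continuous functions with nonnegative components at time 0. Let y_1, y_2 be their regulators and x_1 = z_1 + y_1, x_2 = z_2 + y_2 their reflectors. Then for every t ∈ [0,T]: sup_{s∈[0,t]} |y_1(s) − y_2(s)| ≤ sup_{s∈[0,t]} |z_1(s) − z_2(s)| (componentwise, hence with constant 1 per component), and sup_{s∈[0,t]} |x_1(s) − x_2(s)| ≤ 2 · sup_{s∈[0,t]} |z_1(s) − z_2(s)|, where |·| can be taken as the maximum of the absolute values of the components. -/
open Set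

private lemma sSup_sub_le_aux {f g : ℝ → ℝ} {S : Set ℝ} (hS : S.Nonempty)
    (hbg : BddAbove (g '' S)) {M : ℝ}
    (h : ∀ u ∈ S, f u - g u ≤ M) :
    sSup (f '' S) - sSup (g '' S) ≤ M := by
  rw [sub_le_iff_le_add]
  apply csSup_le (hS.image f)
  rintro a ⟨u, hu, rfl⟩
  have h1 : g u ≤ sSup (g '' S) := le_csSup hbg ⟨u, hu, rfl⟩
  have := h u hu
  linarith

/-- Lipschitz property (in sup norm) of the Skorokhod map: the regulators
satisfy a sup-norm bound with constant 1 and the reflectors with constant 2.  Here the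
norm on `ℝ^d` (i.e. `Fin d → ℝ`) is the max of absolute values of the components. -/
theorem stmt2 (d : ℕ) (T : ℝ) (hT : 0 < T)
    (z₁ z₂ : ℝ → Fin d → ℝ)
    (hz₁ : ContinuousOn z₁ (Icc 0 T)) (hz₂ : ContinuousOn z₂ (Icc 0 T))
    (hz₁0 : ∀ i, 0 ≤ z₁ 0 i) (hz₂0 : ∀ i, 0 ≤ z₂ 0 i)
    (y₁ y₂ x₁ x₂ : ℝ → Fin d → ℝ)
    (hy₁ : ∀ t ∈ Icc (0:ℝ) T, ∀ i, y₁ t i = sSup ((fun s => max (-(z₁ s i)) 0) '' Icc 0 t))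
    (hy₂ : ∀ t ∈ Icc (0:ℝ) T, ∀ i, y₂ t i = sSup ((fun s => max (-(z₂ s i)) 0) '' Icc 0 t))
    (hx₁ : ∀ t ∈ Icc (0:ℝ) T, x₁ t = z₁ t + y₁ t)
    (hx₂ : ∀ t ∈ Icc (0:ℝ) T, x₂ t = z₂ t + y₂ t) :
    ∀ t ∈ Icc (0:ℝ) T,
      sSup ((fun s => ‖y₁ s - y₂ s‖) '' Icc 0 t) ≤
        sSup ((fun s => ‖z₁ s - z₂ s‖) '' Icc 0 t) ∧
      sSup ((fun s => ‖x₁ s - x₂ s‖) '' Icc 0 t) ≤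
        2 * sSup ((fun s => ‖z₁ s - z₂ s‖) '' Icc 0 t) := by
  intro t ht
  obtain ⟨ht0, htT⟩ := ht
  set M := sSup ((fun s => ‖z₁ s - z₂ s‖) '' Icc 0 t) with hMdef
  have hsub : Icc (0:ℝ) t ⊆ Icc 0 T := Icc_subset_Icc le_rfl htT
  have hne : (Icc (0:ℝ) t).Nonempty := ⟨0, le_rfl, ht0⟩
  have hcz : ContinuousOn (fun s => ‖z₁ s - z₂ s‖) (Icc 0 t) :=
    ((hz₁.mono hsub).sub (hz₂.mono hsub)).norm
  have hbddM : BddAbove ((fun s => ‖z₁ s - z₂ s‖) '' Icc 0 t) :=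
    (isCompact_Icc.image_of_continuousOn hcz).bddAbove
  have hM0 : 0 ≤ M :=
    (norm_nonneg _).trans (le_csSup hbddM ⟨0, ⟨le_rfl, ht0⟩, rfl⟩)
  have hzle : ∀ s ∈ Icc (0:ℝ) t, ‖z₁ s - z₂ s‖ ≤ M :=
    fun s hs => le_csSup hbddM ⟨s, hs, rfl⟩
  have hyle : ∀ s ∈ Icc (0:ℝ) t, ‖y₁ s - y₂ s‖ ≤ M := by
    intro s hs
    have hsT : s ∈ Icc (0:ℝ) T := hsub hs
    rw [pi_norm_le_iff_of_nonneg hM0]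
    intro i
    rw [Pi.sub_apply, hy₁ s hsT i, hy₂ s hsT i]
    have hsub2 : Icc (0:ℝ) s ⊆ Icc 0 t := Icc_subset_Icc le_rfl hs.2
    have hne2 : (Icc (0:ℝ) s).Nonempty := ⟨0, le_rfl, hs.1⟩
    have hc1 : ContinuousOn (fun u => max (-(z₁ u i)) 0) (Icc 0 s) :=
      (((continuous_apply i).comp_continuousOn
        (hz₁.mono (hsub2.trans hsub))).neg).sup continuousOn_const
    have hc2 : ContinuousOn (fun u => max (-(z₂ u i)) 0) (Icc 0 s) :=
      (((continuous_apply i).comp_continuousOn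
        (hz₂.mono (hsub2.trans hsub))).neg).sup continuousOn_const
    have hbd1 : BddAbove ((fun u => max (-(z₁ u i)) 0) '' Icc 0 s) :=
      (isCompact_Icc.image_of_continuousOn hc1).bddAbove
    have hbd2 : BddAbove ((fun u => max (-(z₂ u i)) 0) '' Icc 0 s) :=
      (isCompact_Icc.image_of_continuousOn hc2).bddAbove
    have key : ∀ u ∈ Icc (0:ℝ) s, |max (-(z₁ u i)) 0 - max (-(z₂ u i)) 0| ≤ M := by
      intro u hu
      have h1 : |z₁ u i - z₂ u i| ≤ ‖z₁ u - z₂ u‖ := by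
        simpa [Real.norm_eq_abs] using norm_le_pi_norm (z₁ u - z₂ u) i
      have h2 : |max (-(z₁ u i)) 0 - max (-(z₂ u i)) 0| ≤ |(-(z₁ u i)) - (-(z₂ u i))| :=
        abs_max_sub_max_le_abs _ _ _
      have h3 : |(-(z₁ u i)) - (-(z₂ u i))| = |z₁ u i - z₂ u i| := by
        rw [← abs_neg]; ring_nf
      have h4 : ‖z₁ u - z₂ u‖ ≤ M := hzle u (hsub2 hu)
      linarith [h2, h3 ▸ h2]
    rw [Real.norm_eq_abs, abs_sub_le_iff]
    constructor
    · exact sSup_sub_le_aux hne2 hbd2 fun u hu =>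
        (le_abs_self _).trans (key u hu)
    · exact sSup_sub_le_aux hne2 hbd1 fun u hu => by
        have := key u hu
        rw [abs_sub_comm] at this
        exact (le_abs_self _).trans this
  constructor
  · exact csSup_le (hne.image _) (by rintro a ⟨s, hs, rfl⟩; exact hyle s hs)
  · apply csSup_le (hne.image _)
    rintro a ⟨s, hs, rfl⟩
    have hsT : s ∈ Icc (0:ℝ) T := hsub hs
    have : x₁ s - x₂ s = (z₁ s - z₂ s) + (y₁ s - y₂ s) := by
      rw [hx₁ s hsT, hx₂ s hsT]; abel
    calc ‖x₁ s - x₂ s‖ ≤ ‖z₁ s - z₂ s‖ + ‖y₁ s - y₂ s‖ := by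
          rw [this]; exact norm_add_le _ _
      _ ≤ M + M := add_le_add (hzle s hs) (hyle s hs)
      _ = 2 * M := by ring
end

section
/- Let 0 < t_1 < t_2 < t and λ ∈ (0,1). Define z_1, z_2 : [0,t] → ℝ by z_1(s) = ((t_2−s)/(t_2−t_1) − 1)·1_{(t_1,t_2]}(s) − 1_{(t_2,t]}(s) and z_2(s) = (s/t_1)·1_{[0,t_1]}(s) + ((t_2−s)/(t_2−t_1))·1_{(t_1,t_2]}(s), so that z_1(0)=z_2(0)=0. Let y_1, y_2 be the regulators of z_1, z_2. Then y_1(s) = (1 − (t_2−s)/(t_2−t_1))·1_{(t_1,t_2]}(s) + 1_{(t_2,t]}(s), y_2 ≡ 0, and the λ-Hölder seminorms satisfy ‖y_2 − y_1‖_{λ,[0,t]} = (t_2−t_1)^{−λ} while ‖z_2 − z_1‖_{λ,[0,t]} = t_1^{−λ}. -/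
open Set

/-- The `λ`-Hölder seminorm of `f` on `[a,b]`. -/
noncomputable def hSemi {E : Type*} [NormedAddCommGroup E] (l a b : ℝ) (f : ℝ → E) : ℝ :=
  sSup {r : ℝ | ∃ u v : ℝ, a ≤ u ∧ u < v ∧ v ≤ b ∧ r = ‖f v - f u‖ / (v - u) ^ l}

/-- The regulator of a scalar path `z`. -/
noncomputable def reg1 (z : ℝ → ℝ) (s : ℝ) : ℝ :=
  sSup ((fun u => max (-(z u)) 0) '' Icc 0 s)

/-- the clamp function -/
noncomputable def clamp (a c s : ℝ) : ℝ := max 0 (min 1 ((s - a) / c))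

lemma clamp_mono (a c : ℝ) (hc : 0 < c) : Monotone (clamp a c) := by
  intro x y hxy
  unfold clamp
  gcongr

lemma clamp_mem (a c s : ℝ) : clamp a c s ∈ Icc (0:ℝ) 1 :=
  ⟨le_max_left _ _, max_le zero_le_one (min_le_left _ _)⟩

lemma clamp_lip (a c : ℝ) (hc : 0 < c) (u v : ℝ) :
    |clamp a c v - clamp a c u| ≤ |v - u| / c := by
  have h1 : |clamp a c v - clamp a c u| ≤ |min 1 ((v - a)/c) - min 1 ((u - a)/c)| := by
    simpa [clamp] using abs_max_sub_max_le_max (0:ℝ) (min 1 ((v - a)/c)) 0 (min 1 ((u - a)/c))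
  have h2 : |min 1 ((v - a)/c) - min 1 ((u - a)/c)| ≤ |(v - a)/c - (u - a)/c| := by
    simpa using abs_min_sub_min_le_max (1:ℝ) ((v - a)/c) 1 ((u - a)/c)
  have h3 : (v - a)/c - (u - a)/c = (v - u)/c := by ring
  calc |clamp a c v - clamp a c u| ≤ |(v - a)/c - (u - a)/c| := h1.trans h2
    _ = |v - u| / c := by rw [h3, abs_div, abs_of_pos hc]

lemma hSemi_congr (l a b : ℝ) (f g : ℝ → ℝ) (h : ∀ s ∈ Icc a b, f s = g s) :
    hSemi l a b f = hSemi l a b g := by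
  unfold hSemi
  congr 1
  ext r
  constructor <;> rintro ⟨u, v, h1, h2, h3, rfl⟩ <;>
    refine ⟨u, v, h1, h2, h3, ?_⟩ <;>
    rw [h u ⟨h1, h2.le.trans h3⟩, h v ⟨h1.trans h2.le, h3⟩]

lemma hSemi_eq (t c l : ℝ) (hc : 0 < c) (hl : l ∈ Ioo (0:ℝ) 1)
    (g : ℝ → ℝ) (u₀ v₀ : ℝ) (hu₀ : 0 ≤ u₀) (huv : u₀ < v₀) (hv₀ : v₀ ≤ t)
    (hcc : v₀ - u₀ = c) (hw : |g v₀ - g u₀| = 1)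
    (hb1 : ∀ u v, 0 ≤ u → u ≤ v → v ≤ t → |g v - g u| ≤ 1)
    (hb2 : ∀ u v, 0 ≤ u → u ≤ v → v ≤ t → |g v - g u| ≤ (v - u) / c) :
    hSemi l 0 t g = c ^ (-l) := by
  unfold hSemi
  apply IsGreatest.csSup_eq
  constructor
  · exact ⟨u₀, v₀, hu₀, huv, hv₀, by
      rw [Real.norm_eq_abs, hw, hcc, Real.rpow_neg hc.le, one_div]⟩
  · rintro r ⟨u, v, hu, huv', hv, rfl⟩
    rw [Real.norm_eq_abs]
    have hd : 0 < v - u := by linarith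
    have hdl : 0 < (v - u) ^ l := Real.rpow_pos_of_pos hd l
    rw [div_le_iff₀ hdl]
    have key : |g v - g u| ≤ c ^ (-l) * (v - u) ^ l := by
      have hdiv : c ^ (-l) * (v - u) ^ l = ((v - u)/c) ^ l := by
        rw [Real.div_rpow hd.le hc.le, Real.rpow_neg hc.le, div_eq_mul_inv, mul_comm]
      rw [hdiv]
      rcases le_total (v - u) c with hle | hle
      · have h01 : (v - u)/c ≤ 1 := (div_le_one hc).mpr hle
        have := Real.rpow_le_rpow_of_exponent_ge (div_pos hd hc) h01 hl.2.le
        rw [Real.rpow_one] at this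
        exact (hb2 u v hu (by linarith) hv).trans this
      · have h1 : 1 ≤ (v - u)/c := (one_le_div hc).mpr hle
        have : (1:ℝ) ^ l ≤ ((v - u)/c) ^ l := Real.rpow_le_rpow zero_le_one h1 hl.1.le
        rw [Real.one_rpow] at this
        exact (hb1 u v hu huv'.le hv).trans this
    exact key

/-- the explicit counterexample showing the Hölder seminorm of the
difference of two regulators is not controlled by that of the difference of the paths. -/
theorem stmt4 (t₁ t₂ t l : ℝ) (h0 : 0 < t₁) (h1 : t₁ < t₂) (h2 : t₂ < t)
    (hl : l ∈ Ioo (0:ℝ) 1)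
    (z₁ z₂ : ℝ → ℝ)
    (hz₁ : z₁ = fun s => indicator (Ioc t₁ t₂) (fun s => (t₂ - s) / (t₂ - t₁) - 1) s
                 - indicator (Ioc t₂ t) (fun _ => 1) s)
    (hz₂ : z₂ = fun s => indicator (Icc 0 t₁) (fun s => s / t₁) s
                 + indicator (Ioc t₁ t₂) (fun s => (t₂ - s) / (t₂ - t₁)) s) :
    (∀ s ∈ Icc (0:ℝ) t, reg1 z₁ s =
        indicator (Ioc t₁ t₂) (fun s => 1 - (t₂ - s) / (t₂ - t₁)) s
        + indicator (Ioc t₂ t) (fun _ => 1) s) ∧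
    (∀ s ∈ Icc (0:ℝ) t, reg1 z₂ s = 0) ∧
    hSemi l 0 t (fun s => reg1 z₂ s - reg1 z₁ s) = (t₂ - t₁) ^ (-l) ∧
    hSemi l 0 t (fun s => z₂ s - z₁ s) = t₁ ^ (-l) := by
  have hc : 0 < t₂ - t₁ := by linarith
  have hR : ∀ s ∈ Icc (0:ℝ) t,
      indicator (Ioc t₁ t₂) (fun s => 1 - (t₂ - s) / (t₂ - t₁)) s
        + indicator (Ioc t₂ t) (fun _ => (1:ℝ)) s = clamp t₁ (t₂ - t₁) s := by
    intro s hs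
    unfold clamp
    rcases le_or_gt s t₁ with h | h
    · rw [indicator_of_notMem (by rw [mem_Ioc]; push_neg; intro h'; linarith),
        indicator_of_notMem (by rw [mem_Ioc]; push_neg; intro h'; linarith)]
      have hx : (s - t₁) / (t₂ - t₁) ≤ 0 :=
        div_nonpos_of_nonpos_of_nonneg (by linarith) hc.le
      rw [min_eq_right (hx.trans zero_le_one), max_eq_left hx]
      norm_num
    · rcases le_or_gt s t₂ with h' | h'
      · rw [indicator_of_mem (mem_Ioc.mpr ⟨h, h'⟩),
          indicator_of_notMem (by rw [mem_Ioc]; push_neg; intro h''; linarith)]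
        have hx0 : 0 ≤ (s - t₁) / (t₂ - t₁) := div_nonneg (by linarith) hc.le
        have hx1 : (s - t₁) / (t₂ - t₁) ≤ 1 := (div_le_one hc).mpr (by linarith)
        rw [min_eq_right hx1, max_eq_right hx0]
        field_simp
        ring
      · rw [indicator_of_notMem (by rw [mem_Ioc]; push_neg; intro h''; linarith),
          indicator_of_mem (mem_Ioc.mpr ⟨h', hs.2⟩)]
        have hx : (1:ℝ) ≤ (s - t₁) / (t₂ - t₁) := (one_le_div hc).mpr (by linarith)
        rw [min_eq_left hx, max_eq_right zero_le_one]
        norm_num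
  have hnegz₁ : ∀ s, -(z₁ s) =
      indicator (Ioc t₁ t₂) (fun s => 1 - (t₂ - s) / (t₂ - t₁)) s
        + indicator (Ioc t₂ t) (fun _ => (1:ℝ)) s := by
    intro s
    simp only [hz₁, indicator_apply, mem_Ioc]
    split_ifs <;> ring
  have part1 : ∀ s ∈ Icc (0:ℝ) t, reg1 z₁ s =
      indicator (Ioc t₁ t₂) (fun s => 1 - (t₂ - s) / (t₂ - t₁)) s
        + indicator (Ioc t₂ t) (fun _ => (1:ℝ)) s := by
    intro s hs
    have himg : (fun u => max (-(z₁ u)) 0) '' Icc 0 s = clamp t₁ (t₂ - t₁) '' Icc 0 s := by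
      apply image_congr
      intro u hu
      have hu' : u ∈ Icc (0:ℝ) t := ⟨hu.1, hu.2.trans hs.2⟩
      rw [hnegz₁ u, hR u hu']
      exact max_eq_left (clamp_mem _ _ _).1
    have hg : IsGreatest (clamp t₁ (t₂ - t₁) '' Icc 0 s) (clamp t₁ (t₂ - t₁) s) := by
      constructor
      · exact mem_image_of_mem _ ⟨hs.1, le_rfl⟩
      · rintro r ⟨u, hu, rfl⟩
        exact clamp_mono t₁ _ hc hu.2
    rw [reg1, himg, hg.csSup_eq, ← hR s hs]
  have hz₂nn : ∀ u, 0 ≤ z₂ u := by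
    intro u
    simp only [hz₂]
    refine add_nonneg (indicator_nonneg ?_ _) (indicator_nonneg ?_ _)
    · intro x hx
      exact div_nonneg hx.1 h0.le
    · intro x hx
      rw [mem_Ioc] at hx
      exact div_nonneg (by linarith [hx.2]) hc.le
  have part2 : ∀ s ∈ Icc (0:ℝ) t, reg1 z₂ s = 0 := by
    intro s hs
    have himg : (fun u => max (-(z₂ u)) 0) '' Icc 0 s = {0} := by
      rw [show (fun u => max (-(z₂ u)) 0) = fun _ => (0:ℝ) from
        funext fun u => max_eq_right (neg_nonpos.mpr (hz₂nn u))]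
      exact (nonempty_Icc.mpr hs.1).image_const 0
    rw [reg1, himg, csSup_singleton]
  have hclamp₁0 : clamp t₁ (t₂ - t₁) t₁ = 0 := by
    unfold clamp
    rw [sub_self, zero_div]
    norm_num
  have hclamp₁1 : clamp t₁ (t₂ - t₁) t₂ = 1 := by
    unfold clamp
    rw [div_self hc.ne']
    norm_num
  refine ⟨part1, part2, ?_, ?_⟩
  · have heq3 : ∀ s ∈ Icc (0:ℝ) t, reg1 z₂ s - reg1 z₁ s = -clamp t₁ (t₂ - t₁) s := by
      intro s hs
      rw [part1 s hs, part2 s hs, hR s hs]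
      ring
    rw [hSemi_congr l 0 t _ _ heq3]
    refine hSemi_eq t (t₂ - t₁) l hc hl _ t₁ t₂ h0.le h1 h2.le rfl ?_ ?_ ?_
    · rw [hclamp₁0, hclamp₁1]
      norm_num
    · intro u v hu huv hv
      have hmu := clamp_mem t₁ (t₂ - t₁) u
      have hmv := clamp_mem t₁ (t₂ - t₁) v
      have he : -clamp t₁ (t₂ - t₁) v - -clamp t₁ (t₂ - t₁) u
          = clamp t₁ (t₂ - t₁) u - clamp t₁ (t₂ - t₁) v := by ring
      rw [he, abs_le]
      exact ⟨by linarith [hmu.1, hmv.2], by linarith [hmu.2, hmv.1]⟩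
    · intro u v hu huv hv
      have he : -clamp t₁ (t₂ - t₁) v - -clamp t₁ (t₂ - t₁) u
          = -(clamp t₁ (t₂ - t₁) v - clamp t₁ (t₂ - t₁) u) := by ring
      rw [he, abs_neg]
      have := clamp_lip t₁ (t₂ - t₁) hc u v
      rwa [abs_of_nonneg (by linarith : (0:ℝ) ≤ v - u)] at this
  · have heq4 : ∀ s ∈ Icc (0:ℝ) t, z₂ s - z₁ s = clamp 0 t₁ s := by
      intro s hs
      simp only [hz₁, hz₂]
      unfold clamp
      rw [sub_zero]
      rcases le_or_gt s t₁ with h | h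
      · rw [indicator_of_mem (mem_Icc.mpr ⟨hs.1, h⟩),
          indicator_of_notMem (by rw [mem_Ioc]; push_neg; intro h'; linarith),
          indicator_of_notMem (by rw [mem_Ioc]; push_neg; intro h'; linarith),
          indicator_of_notMem (by rw [mem_Ioc]; push_neg; intro h'; linarith)]
        have hx0 : 0 ≤ s / t₁ := div_nonneg hs.1 h0.le
        have hx1 : s / t₁ ≤ 1 := (div_le_one h0).mpr h
        rw [min_eq_right hx1, max_eq_right hx0]
        ring
      · have hx : (1:ℝ) ≤ s / t₁ := (one_le_div h0).mpr h.le
        rw [min_eq_left hx, max_eq_right zero_le_one,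
          indicator_of_notMem (by rw [mem_Icc]; push_neg; intro h'; linarith)]
        rcases le_or_gt s t₂ with h' | h'
        · rw [indicator_of_mem (mem_Ioc.mpr ⟨h, h'⟩),
            indicator_of_mem (mem_Ioc.mpr ⟨h, h'⟩),
            indicator_of_notMem (by rw [mem_Ioc]; push_neg; intro h''; linarith)]
          ring
        · rw [indicator_of_notMem (by rw [mem_Ioc]; push_neg; intro h''; linarith),
            indicator_of_notMem (by rw [mem_Ioc]; push_neg; intro h''; linarith),
            indicator_of_mem (mem_Ioc.mpr ⟨h', hs.2⟩)]
          ring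
    rw [hSemi_congr l 0 t _ _ heq4]
    have hc0 : clamp 0 t₁ 0 = 0 := by
      unfold clamp
      rw [sub_zero, zero_div]
      norm_num
    have hc1 : clamp 0 t₁ t₁ = 1 := by
      unfold clamp
      rw [sub_zero, div_self h0.ne']
      norm_num
    refine hSemi_eq t t₁ l h0 hl _ 0 t₁ le_rfl h0 (by linarith) (by ring) ?_ ?_ ?_
    · rw [hc0, hc1]
      norm_num
    · intro u v hu huv hv
      have hmu := clamp_mem 0 t₁ u
      have hmv := clamp_mem 0 t₁ v
      rw [abs_le]
      exact ⟨by linarith [hmu.2, hmv.1], by linarith [hmu.1, hmv.2]⟩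
    · intro u v hu huv hv
      have := clamp_lip 0 t₁ h0 u v
      rwa [abs_of_nonneg (by linarith : (0:ℝ) ≤ v - u)] at this
end

section
/- Let λ ∈ (0,1). For every constant C > 0 there exist continuous functions z_1, z_2 : [0,1] → ℝ with z_1(0) = z_2(0) = 0 and finite λ-Hölder seminorms such that their regulators y_1, y_2 satisfy ‖y_1 − y_2‖_{λ,[0,1]} > C · ‖z_1 − z_2‖_{λ,[0,1]}. In other words, the λ-Hölder seminorm of the difference of two regulator terms cannot in general be bounded by a constant times the λ-Hölder seminorm of the difference of the underlying paths. -/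
open Set

noncomputable def fP (s : ℝ) : ℝ := 1/4 - min |s - 1/4| |s - 3/4|

noncomputable def zA (e : ℝ) : ℝ → ℝ := fun s => -(fP s) - e * s

noncomputable def zB : ℝ → ℝ := fun s => -(fP s)

lemma fP_lip (a b : ℝ) : |fP b - fP a| ≤ |b - a| := by
  unfold fP
  have h1 := abs_min_sub_min_le_max |b - 1/4| |b - 3/4| |a - 1/4| |a - 3/4|
  have h2 := abs_abs_sub_abs_le_abs_sub (b - 1/4) (a - 1/4)
  have h3 := abs_abs_sub_abs_le_abs_sub (b - 3/4) (a - 3/4)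
  have e2 : b - 1/4 - (a - 1/4) = b - a := by ring
  have e3 : b - 3/4 - (a - 3/4) = b - a := by ring
  rw [e2] at h2; rw [e3] at h3
  have heq : (1/4 - min |b - 1/4| |b - 3/4|) - (1/4 - min |a - 1/4| |a - 3/4|)
      = -(min |b - 1/4| |b - 3/4| - min |a - 1/4| |a - 3/4|) := by ring
  rw [heq, abs_neg]
  exact h1.trans (max_le h2 h3)

lemma fP_cont : Continuous fP := by
  unfold fP; fun_prop

lemma fP_zero : fP 0 = 0 := by
  unfold fP
  have h1 : |(0:ℝ) - 1/4| = 1/4 := by rw [abs_of_nonpos] <;> norm_num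
  have h2 : |(0:ℝ) - 3/4| = 3/4 := by rw [abs_of_nonpos] <;> norm_num
  rw [h1, h2]; norm_num

lemma fP_le (u : ℝ) : fP u ≤ 1/4 := by
  unfold fP
  have : (0:ℝ) ≤ min |u - 1/4| |u - 3/4| := le_min (abs_nonneg _) (abs_nonneg _)
  linarith

lemma fP_quarter : fP (1/4) = 1/4 := by
  unfold fP
  have h1 : |(1:ℝ)/4 - 1/4| = 0 := by norm_num
  rw [h1]
  have h2 : (0:ℝ) ≤ |(1:ℝ)/4 - 3/4| := abs_nonneg _
  rw [min_eq_left h2]; norm_num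

lemma fP_3quarter : fP (3/4) = 1/4 := by
  unfold fP
  have h1 : |(3:ℝ)/4 - 3/4| = 0 := by norm_num
  rw [h1]
  have h2 : (0:ℝ) ≤ |(3:ℝ)/4 - 1/4| := abs_nonneg _
  rw [min_eq_right h2]; norm_num

lemma reg1_eq (z : ℝ → ℝ) (s M : ℝ) (hs : 0 ≤ s)
    (hub : ∀ u ∈ Icc (0:ℝ) s, max (-(z u)) 0 ≤ M)
    (hmem : ∃ u ∈ Icc (0:ℝ) s, max (-(z u)) 0 = M) : reg1 z s = M := by
  obtain ⟨u0, hu0, hval⟩ := hmem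
  apply le_antisymm
  · apply csSup_le ((nonempty_Icc.mpr hs).image _)
    rintro r ⟨u, hu, rfl⟩
    exact hub u hu
  · exact le_csSup ⟨M, by rintro r ⟨u, hu, rfl⟩; exact hub u hu⟩ ⟨u0, hu0, hval⟩

lemma max_neg_lip (a b : ℝ) : max (-a) 0 ≤ max (-b) 0 + |a - b| := by
  apply max_le
  · have h : -a = -b + (b - a) := by ring
    rw [h]
    exact add_le_add (le_max_left _ _) (abs_sub_comm a b ▸ le_abs_self (b - a))
  · exact add_nonneg (le_max_right _ _) (abs_nonneg _)

lemma reg1_lip (z : ℝ → ℝ) (K : ℝ) (hK : 0 ≤ K)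
    (hz : ∀ a ∈ Icc (0:ℝ) 1, ∀ b ∈ Icc (0:ℝ) 1, |z b - z a| ≤ K * |b - a|)
    {u v : ℝ} (hu : 0 ≤ u) (huv : u ≤ v) (hv : v ≤ 1) :
    |reg1 z v - reg1 z u| ≤ K * (v - u) := by
  have hv0 : 0 ≤ v := hu.trans huv
  have hu1 : u ≤ 1 := huv.trans hv
  have hbdd : ∀ s, 0 ≤ s → s ≤ 1 → BddAbove ((fun w => max (-(z w)) 0) '' Icc 0 s) := by
    intro s hs0 hs1
    refine ⟨max (-(z 0)) 0 + K, ?_⟩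
    rintro r ⟨w, hw, rfl⟩
    have hw1 : w ∈ Icc (0:ℝ) 1 := ⟨hw.1, hw.2.trans hs1⟩
    have h1 := max_neg_lip (z w) (z 0)
    have h2 := hz 0 ⟨le_refl 0, zero_le_one⟩ w hw1
    have h3 : |w - 0| ≤ 1 := by rw [sub_zero, abs_of_nonneg hw.1]; exact hw1.2
    nlinarith [abs_nonneg (w - 0)]
  have hmono : reg1 z u ≤ reg1 z v := by
    apply csSup_le ((nonempty_Icc.mpr hu).image _)
    rintro r ⟨w, hw, rfl⟩
    exact le_csSup (hbdd v hv0 hv) ⟨w, ⟨hw.1, hw.2.trans huv⟩, rfl⟩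
  have hincr : reg1 z v ≤ reg1 z u + K * (v - u) := by
    apply csSup_le ((nonempty_Icc.mpr hv0).image _)
    rintro r ⟨w, hw, rfl⟩
    by_cases hwu : w ≤ u
    · have h : max (-(z w)) 0 ≤ reg1 z u :=
        le_csSup (hbdd u hu hu1) ⟨w, ⟨hw.1, hwu⟩, rfl⟩
      nlinarith
    · push_neg at hwu
      have h1 := max_neg_lip (z w) (z u)
      have h2 : max (-(z u)) 0 ≤ reg1 z u :=
        le_csSup (hbdd u hu hu1) ⟨u, ⟨hu, le_refl u⟩, rfl⟩
      have h3 := hz u ⟨hu, hu1⟩ w ⟨hw.1, hw.2.trans hv⟩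
      have h4 : |w - u| = w - u := abs_of_pos (by linarith)
      rw [h4] at h3
      nlinarith [hw.2]
  rw [abs_sub_le_iff]
  constructor
  · linarith
  · nlinarith

lemma regB_val (s : ℝ) (h1 : 1/4 ≤ s) (h2 : s ≤ 1) : reg1 zB s = 1/4 := by
  apply reg1_eq _ _ _ (by linarith)
  · intro w hw
    show max (-(-(fP w))) 0 ≤ 1/4
    rw [neg_neg]
    exact max_le (fP_le w) (by norm_num)
  · refine ⟨1/4, ⟨by norm_num, h1⟩, ?_⟩
    show max (-(-(fP (1/4)))) 0 = 1/4
    rw [neg_neg, fP_quarter]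
    exact max_eq_left (by norm_num)

lemma regA_hi (e : ℝ) (he : 0 ≤ e) : reg1 (zA e) (3/4) = 1/4 + 3*e/4 := by
  apply reg1_eq _ _ _ (by norm_num)
  · intro w hw
    show max (-(-(fP w) - e * w)) 0 ≤ 1/4 + 3*e/4
    have h1 : -(-(fP w) - e * w) = fP w + e * w := by ring
    rw [h1]
    refine max_le ?_ (by positivity)
    have := fP_le w
    nlinarith [hw.1, hw.2]
  · refine ⟨3/4, ⟨by norm_num, le_refl _⟩, ?_⟩
    show max (-(-(fP (3/4)) - e * (3/4))) 0 = 1/4 + 3*e/4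
    have h1 : -(-(fP (3/4)) - e * (3/4)) = fP (3/4) + 3*e/4 := by ring
    rw [h1, fP_3quarter]
    exact max_eq_left (by positivity)

lemma regA_mid (e : ℝ) (he0 : 0 < e) (he1 : e ≤ 1) :
    reg1 (zA e) ((3/4 + e/4)/(1+e)) = 1/4 + e/4 := by
  have hB : (0:ℝ) < 1 + e := by linarith
  have hs0 : (0:ℝ) ≤ (3/4 + e/4)/(1+e) := by positivity
  have hsq : (1:ℝ)/4 ≤ (3/4 + e/4)/(1+e) := by
    rw [le_div_iff₀ hB]; nlinarith
  apply reg1_eq _ _ _ hs0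
  · intro w hw
    show max (-(-(fP w) - e * w)) 0 ≤ 1/4 + e/4
    have h1 : -(-(fP w) - e * w) = fP w + e * w := by ring
    rw [h1]
    refine max_le ?_ (by positivity)
    -- need fP w + e*w ≤ 1/4 + e/4, i.e. e*(w-1/4) ≤ min |w-1/4| |w-3/4|
    have hws : w * (1+e) ≤ 3/4 + e/4 := (le_div_iff₀ hB).mp hw.2
    have hw34 : w ≤ 3/4 := by nlinarith [hw.1]
    have hmin : e * (w - 1/4) ≤ min |w - 1/4| |w - 3/4| := by
      refine le_min ?_ ?_
      · rcases abs_cases (w - 1/4) with ⟨h, _⟩ | ⟨h, hneg⟩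
        · rw [h]; nlinarith
        · rw [h]; nlinarith
      · have : |w - 3/4| = 3/4 - w := by rw [abs_of_nonpos (by linarith)]; ring
        rw [this]; nlinarith
    unfold fP
    linarith
  · refine ⟨1/4, ⟨by norm_num, hsq⟩, ?_⟩
    show max (-(-(fP (1/4)) - e * (1/4)) ) 0 = 1/4 + e/4
    have h1 : -(-(fP (1/4)) - e * (1/4)) = fP (1/4) + e/4 := by ring
    rw [h1, fP_quarter]
    exact max_eq_left (by positivity)

set_option maxHeartbeats 2000000 in
/-- no constant `C` can bound the Hölder seminorm of the difference of two
regulators by `C` times the Hölder seminorm of the difference of the underlying paths. -/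
theorem stmt5 (l : ℝ) (hl : l ∈ Ioo (0:ℝ) 1) (C : ℝ) (hC : 0 < C) :
    ∃ z₁ z₂ : ℝ → ℝ,
      ContinuousOn z₁ (Icc 0 1) ∧ ContinuousOn z₂ (Icc 0 1) ∧
      z₁ 0 = 0 ∧ z₂ 0 = 0 ∧
      (∃ C₁, ∀ u ∈ Icc (0:ℝ) 1, ∀ v ∈ Icc (0:ℝ) 1, |z₁ v - z₁ u| ≤ C₁ * |v - u| ^ l) ∧
      (∃ C₂, ∀ u ∈ Icc (0:ℝ) 1, ∀ v ∈ Icc (0:ℝ) 1, |z₂ v - z₂ u| ≤ C₂ * |v - u| ^ l) ∧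
      C * hSemi l 0 1 (fun s => z₁ s - z₂ s) <
        hSemi l 0 1 (fun s => reg1 z₁ s - reg1 z₂ s) := by
  obtain ⟨hl0, hl1⟩ := hl
  -- choice of epsilon
  set δ : ℝ := (1/(2*C+1)) ^ (1/l) with hδdef
  have hδpos : 0 < δ := Real.rpow_pos_of_pos (by positivity) _
  set e : ℝ := min (1/2) δ with hedef
  have he0 : 0 < e := lt_min (by norm_num) hδpos
  have he2 : e ≤ 1/2 := min_le_left _ _
  have he1 : e ≤ 1 := he2.trans (by norm_num)
  have heδ : e ≤ δ := min_le_right _ _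
  have hδl : δ ^ l = 1/(2*C+1) := by
    rw [hδdef, ← Real.rpow_mul (by positivity)]
    rw [one_div_mul_cancel (ne_of_gt hl0), Real.rpow_one]
  clear_value e δ
  -- abs difference ≤ 1 on the interval, and |v-u| ≤ |v-u|^l
  have habs_le : ∀ u ∈ Icc (0:ℝ) 1, ∀ v ∈ Icc (0:ℝ) 1, |v - u| ≤ 1 := by
    intro u hu v hv
    rw [abs_le]
    constructor <;> [linarith [hu.2, hv.1]; linarith [hu.1, hv.2]]
  have hrpow_ge : ∀ x : ℝ, 0 < x → x ≤ 1 → x ≤ x ^ l := by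
    intro x hx hx1
    calc x = x ^ (1:ℝ) := (Real.rpow_one x).symm
      _ ≤ x ^ l := Real.rpow_le_rpow_of_exponent_ge hx hx1 hl1.le
  -- Lipschitz bounds
  have hlipA : ∀ a ∈ Icc (0:ℝ) 1, ∀ b ∈ Icc (0:ℝ) 1, |zA e b - zA e a| ≤ 2 * |b - a| := by
    intro a _ b _
    have h1 := fP_lip b a
    have heq : zA e b - zA e a = (fP a - fP b) + e * (a - b) := by unfold zA; ring
    rw [heq]
    calc |(fP a - fP b) + e * (a - b)| ≤ |fP a - fP b| + |e * (a - b)| := abs_add_le _ _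
      _ = |fP a - fP b| + e * |a - b| := by rw [abs_mul, abs_of_nonneg he0.le]
      _ ≤ |a - b| + 1 * |a - b| := by
          have := abs_sub_comm (fP a) (fP b)
          nlinarith [abs_nonneg (a - b)]
      _ = 2 * |b - a| := by rw [abs_sub_comm a b]; ring
  have hlipB : ∀ a ∈ Icc (0:ℝ) 1, ∀ b ∈ Icc (0:ℝ) 1, |zB b - zB a| ≤ 1 * |b - a| := by
    intro a _ b _
    have h1 := fP_lip a b
    have heq : zB b - zB a = -(fP b - fP a) := by unfold zB; ring
    rw [heq, abs_neg, one_mul]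
    exact h1
  refine ⟨zA e, zB, ?_, ?_, ?_, ?_, ?_, ?_, ?_⟩
  · exact (Continuous.continuousOn (by unfold zA; exact (fP_cont.neg).sub (continuous_const.mul continuous_id)))
  · exact fP_cont.neg.continuousOn
  · show -(fP 0) - e * 0 = 0
    rw [fP_zero]; ring
  · show -(fP 0) = 0
    rw [fP_zero]; ring
  · refine ⟨2, fun u hu v hv => ?_⟩
    rcases eq_or_ne v u with rfl | hne
    · simp [Real.rpow_natCast]
      positivity
    · have habs : 0 < |v - u| := abs_pos.mpr (sub_ne_zero.mpr hne)
      have h2 := hrpow_ge _ habs (habs_le u hu v hv)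
      have h3 := hlipA u hu v hv
      nlinarith
  · refine ⟨1, fun u hu v hv => ?_⟩
    rcases eq_or_ne v u with rfl | hne
    · simp [Real.rpow_natCast]
      positivity
    · have habs : 0 < |v - u| := abs_pos.mpr (sub_ne_zero.mpr hne)
      have h2 := hrpow_ge _ habs (habs_le u hu v hv)
      have h3 := hlipB u hu v hv
      nlinarith
  -- the main inequality
  · have hB : (0:ℝ) < 1 + e := by linarith
    set s₀ : ℝ := (3/4 + e/4)/(1+e) with hs₀def
    have hs₀0 : (0:ℝ) ≤ s₀ := by positivity
    have hs₀lt : s₀ < 3/4 := by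
      rw [hs₀def, div_lt_iff₀ hB]; nlinarith
    have hs₀q : (1:ℝ)/4 ≤ s₀ := by
      rw [hs₀def, le_div_iff₀ hB]; nlinarith
    -- LHS bound : hSemi of difference ≤ e
    have hLHS : hSemi l 0 1 (fun s => zA e s - zB s) ≤ e := by
      apply csSup_le
      · exact ⟨_, 0, 1, le_refl 0, zero_lt_one, le_refl 1, rfl⟩
      · rintro r ⟨u, v, hu0, huv, hv1, rfl⟩
        have hvu : 0 < v - u := by linarith
        have hvu1 : v - u ≤ 1 := by linarith
        have hpow : 0 < (v - u) ^ l := Real.rpow_pos_of_pos hvu l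
        have hval : ‖(fun s => zA e s - zB s) v - (fun s => zA e s - zB s) u‖ = e * (v - u) := by
          simp only [zA, zB]
          rw [Real.norm_eq_abs]
          have heq : -(fP v) - e * v - -(fP v) - (-(fP u) - e * u - -(fP u)) = -(e * (v - u)) := by
            ring
          rw [show (-(fP v) - e * v - (-(fP v)) - (-(fP u) - e * u - (-(fP u)))) = -(e*(v-u)) by ring,
            abs_neg, abs_of_nonneg (by nlinarith)]
        rw [hval, div_le_iff₀ hpow]
        have := hrpow_ge _ hvu hvu1
        nlinarith
    -- RHS lower bound
    set D : ℝ → ℝ := fun s => reg1 (zA e) s - reg1 zB s with hDdef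
    have hbddRHS : BddAbove {r : ℝ | ∃ u v : ℝ, 0 ≤ u ∧ u < v ∧ v ≤ 1 ∧
        r = ‖D v - D u‖ / (v - u) ^ l} := by
      refine ⟨3, ?_⟩
      rintro r ⟨u, v, hu0, huv, hv1, rfl⟩
      have hvu : 0 < v - u := by linarith
      have hvu1 : v - u ≤ 1 := by linarith
      have hpow : 0 < (v - u) ^ l := Real.rpow_pos_of_pos hvu l
      have hA := reg1_lip (zA e) 2 (by norm_num) hlipA hu0 huv.le hv1
      have hBl := reg1_lip zB 1 (by norm_num) hlipB hu0 huv.le hv1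
      have hDle : ‖D v - D u‖ ≤ 3 * (v - u) := by
        rw [Real.norm_eq_abs, hDdef]
        have : (fun s => reg1 (zA e) s - reg1 zB s) v - (fun s => reg1 (zA e) s - reg1 zB s) u
            = (reg1 (zA e) v - reg1 (zA e) u) - (reg1 zB v - reg1 zB u) := by ring
        rw [this]
        calc |(reg1 (zA e) v - reg1 (zA e) u) - (reg1 zB v - reg1 zB u)|
            ≤ |reg1 (zA e) v - reg1 (zA e) u| + |reg1 zB v - reg1 zB u| := abs_sub _ _
          _ ≤ 2 * (v - u) + 1 * (v - u) := add_le_add hA hBl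
          _ = 3 * (v - u) := by ring
      rw [div_le_iff₀ hpow]
      have := hrpow_ge _ hvu hvu1
      nlinarith
    have hmem : (e/2) / ((e/2)/(1+e)) ^ l ∈ {r : ℝ | ∃ u v : ℝ, 0 ≤ u ∧ u < v ∧ v ≤ 1 ∧
        r = ‖D v - D u‖ / (v - u) ^ l} := by
      refine ⟨s₀, 3/4, hs₀0, hs₀lt, by norm_num, ?_⟩
      have h1 : D (3/4) = 3*e/4 := by
        show reg1 (zA e) (3/4) - reg1 zB (3/4) = 3*e/4
        rw [regA_hi e he0.le, regB_val (3/4) (by norm_num) (by norm_num)]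
        ring
      have h2 : D s₀ = e/4 := by
        show reg1 (zA e) s₀ - reg1 zB s₀ = e/4
        rw [hs₀def]
        rw [regA_mid e he0 he1, regB_val _ (by rw [← hs₀def]; exact hs₀q) (by nlinarith [hs₀lt])]
        ring
      have h3 : (3:ℝ)/4 - s₀ = (e/2)/(1+e) := by
        rw [hs₀def]; field_simp; ring
      rw [h1, h2, h3, Real.norm_eq_abs, abs_of_nonneg (by linarith),
        show (3*e/4 - e/4 : ℝ) = e/2 from by ring]
    have hRHS : (e/2) / ((e/2)/(1+e)) ^ l ≤
        hSemi l 0 1 (fun s => reg1 (zA e) s - reg1 zB s) := le_csSup hbddRHS hmem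
    -- key numeric inequality : C * e < (e/2) / ((e/2)/(1+e))^l
    have hepos : (0:ℝ) < e/2 := by linarith
    have ht : (0:ℝ) < (e/2)/(1+e) := by positivity
    have htle : (e/2)/(1+e) ≤ e/2 := by
      apply div_le_self hepos.le; linarith
    have hp1 : ((e/2)/(1+e)) ^ l ≤ (e/2) ^ l :=
      Real.rpow_le_rpow ht.le htle hl0.le
    have hp2 : (e/2) ^ l ≤ 1/(2*C+1) := by
      have h1 : (e/2) ^ l ≤ δ ^ l :=
        Real.rpow_le_rpow (by positivity) (by linarith) hl0.le
      linarith [hδl]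
    have hppos : (0:ℝ) < ((e/2)/(1+e)) ^ l := Real.rpow_pos_of_pos ht l
    have hkey : C * e < (e/2) / ((e/2)/(1+e)) ^ l := by
      rw [lt_div_iff₀ hppos]
      have h1 : ((e/2)/(1+e)) ^ l ≤ 1/(2*C+1) := hp1.trans hp2
      have h2 : C * e * (((e/2)/(1+e)) ^ l) ≤ C * e * (1/(2*C+1)) := by
        apply mul_le_mul_of_nonneg_left h1 (by positivity)
      have h3 : C * e * (1/(2*C+1)) < e/2 := by
        rw [mul_one_div, div_lt_iff₀ (by linarith : (0:ℝ) < 2*C+1)]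
        nlinarith
      linarith
    calc C * hSemi l 0 1 (fun s => zA e s - zB s) ≤ C * e :=
          mul_le_mul_of_nonneg_left hLHS hC.le
      _ < (e/2) / ((e/2)/(1+e)) ^ l := hkey
      _ ≤ _ := hRHS
end
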